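/- For every χ > 0 there exists a constant B₀ > 0 such that for all m ∈ ℤ: Σ_{n∈ℤ} e^{−χ(|m−n|+|n|)} / (⟨m−n⟩²·⟨n⟩²) ≤ B₀·e^{−χ|m|}/⟨m⟩². -/

import Mathlib

noncomputable section

/-- `⟨m⟩ = |m|` for `m ≠ 0` and `⟨0⟩ = 1`. -/
def jnorm (m : ℤ) : ℝ := if m = 0 then 1 else |(m : ℝ)|

lemma jnorm_ge_one (m : ℤ) : 1 ≤ jnorm m := by
  unfold jnorm
  split
  · exact le_refl 1
  · rename_i h
    rw [← Int.cast_abs]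
    exact_mod_cast Int.one_le_abs (by simpa using h)

lemma jnorm_pos (m : ℤ) : 0 < jnorm m := lt_of_lt_of_le one_pos (jnorm_ge_one m)

lemma abs_le_jnorm (m : ℤ) : |(m : ℝ)| ≤ jnorm m := by
  unfold jnorm
  split
  · rename_i h; simp [h]
  · exact le_refl _

lemma jnorm_triangle (a b : ℤ) : jnorm (a + b) ≤ jnorm a + jnorm b := by
  rcases eq_or_ne (a + b) 0 with h | h
  · rw [jnorm, if_pos h]
    have := jnorm_ge_one a
    have := jnorm_ge_one b
    linarith
  · rw [jnorm, if_neg h]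
    push_cast
    calc |(a : ℝ) + b| ≤ |(a : ℝ)| + |(b : ℝ)| := abs_add_le _ _
    _ ≤ jnorm a + jnorm b := add_le_add (abs_le_jnorm a) (abs_le_jnorm b)

lemma summable_jnorm_inv_sq : Summable (fun k : ℤ => 1 / jnorm k ^ 2) := by
  have hg : Summable fun k : ℤ => 1 / (k : ℝ) ^ 2 :=
    Real.summable_one_div_int_pow.mpr one_lt_two
  have hδ : Summable fun k : ℤ => (if k = 0 then (1 : ℝ) else 0) := by
    apply summable_of_ne_finset_zero (s := {0})
    intro b hb
    simp_all
  apply (hg.add hδ).congr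
  intro k
  rcases eq_or_ne k 0 with h | h
  · simp [h, jnorm]
  · simp [jnorm, h, sq_abs]

theorem convolution_decay_bound (χ : ℝ) (hχ : 0 < χ) :
    ∃ B₀ : ℝ, 0 < B₀ ∧ ∀ m : ℤ,
      (Summable fun n : ℤ =>
        Real.exp (-χ * (|((m - n : ℤ) : ℝ)| + |(n : ℝ)|)) / (jnorm (m - n) ^ 2 * jnorm n ^ 2)) ∧
      (∑' n : ℤ,
        Real.exp (-χ * (|((m - n : ℤ) : ℝ)| + |(n : ℝ)|)) / (jnorm (m - n) ^ 2 * jnorm n ^ 2))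
        ≤ B₀ * Real.exp (-χ * |(m : ℝ)|) / jnorm m ^ 2 := by
  set S : ℝ := ∑' k : ℤ, 1 / jnorm k ^ 2 with hS
  have hSpos : 0 < S := by
    refine Summable.tsum_pos summable_jnorm_inv_sq
      (fun k => (div_pos one_pos (pow_pos (jnorm_pos k) 2)).le) 0
      (div_pos one_pos (pow_pos (jnorm_pos 0) 2))
  refine ⟨4 * S, by linarith, fun m => ?_⟩
  set f : ℤ → ℝ := fun n =>
    Real.exp (-χ * (|((m - n : ℤ) : ℝ)| + |(n : ℝ)|)) / (jnorm (m - n) ^ 2 * jnorm n ^ 2) with hf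
  set g : ℤ → ℝ := fun n =>
    2 * Real.exp (-χ * |(m : ℝ)|) / jnorm m ^ 2 *
      (1 / jnorm (m - n) ^ 2 + 1 / jnorm n ^ 2) with hg
  have hshift : Summable fun n : ℤ => 1 / jnorm (m - n) ^ 2 := by
    have := ((Equiv.subLeft m).summable_iff
      (f := fun k : ℤ => 1 / jnorm k ^ 2)).mpr summable_jnorm_inv_sq
    simpa [Function.comp_def] using this
  have hgsum : Summable g := (hshift.add summable_jnorm_inv_sq).mul_left _
  have hfnonneg : ∀ n, 0 ≤ f n := fun n => by
    have h1 := jnorm_pos (m - n); have h2 := jnorm_pos n; positivity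
  have hfle : ∀ n, f n ≤ g n := by
    intro n
    have hA := jnorm_ge_one (m - n)
    have hB := jnorm_ge_one n
    have hM := jnorm_pos m
    have habs : |(m : ℝ)| ≤ |((m - n : ℤ) : ℝ)| + |(n : ℝ)| := by
      have : (m : ℝ) = ((m - n : ℤ) : ℝ) + (n : ℝ) := by push_cast; ring
      rw [this]; exact abs_add_le _ _
    have hexp : Real.exp (-χ * (|((m - n : ℤ) : ℝ)| + |(n : ℝ)|)) ≤
        Real.exp (-χ * |(m : ℝ)|) := by
      apply Real.exp_le_exp.mpr
      nlinarith
    have hMsq : jnorm m ^ 2 ≤ 2 * (jnorm (m - n) ^ 2 + jnorm n ^ 2) := by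
      have h1 : jnorm m ≤ jnorm (m - n) + jnorm n := by
        have : m = (m - n) + n := by ring
        calc jnorm m = jnorm ((m - n) + n) := by rw [← this]
        _ ≤ jnorm (m - n) + jnorm n := jnorm_triangle _ _
      have h2 : jnorm m ^ 2 ≤ (jnorm (m - n) + jnorm n) ^ 2 :=
        pow_le_pow_left₀ hM.le h1 2
      nlinarith [sq_nonneg (jnorm (m - n) - jnorm n)]
    have hkey : 1 / (jnorm (m - n) ^ 2 * jnorm n ^ 2) ≤
        2 / jnorm m ^ 2 * (1 / jnorm (m - n) ^ 2 + 1 / jnorm n ^ 2) := by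
      rw [div_add_div _ _ (by positivity) (by positivity), div_mul_div_comm,
        div_le_div_iff₀ (by positivity) (by positivity)]
      ring_nf
      nlinarith [mul_le_mul_of_nonneg_right hMsq
        (by positivity : (0:ℝ) ≤ jnorm (m - n) ^ 2 * jnorm n ^ 2)]
    calc f n = Real.exp (-χ * (|((m - n : ℤ) : ℝ)| + |(n : ℝ)|)) *
        (1 / (jnorm (m - n) ^ 2 * jnorm n ^ 2)) := by rw [hf]; ring
    _ ≤ Real.exp (-χ * |(m : ℝ)|) *
        (2 / jnorm m ^ 2 * (1 / jnorm (m - n) ^ 2 + 1 / jnorm n ^ 2)) := by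
        apply mul_le_mul hexp hkey (by positivity) (Real.exp_pos _).le
    _ = g n := by rw [hg]; ring
  have hfsum : Summable f := Summable.of_nonneg_of_le hfnonneg hfle hgsum
  refine ⟨hfsum, ?_⟩
  have h1 : (∑' n, f n) ≤ ∑' n, g n := Summable.tsum_le_tsum hfle hfsum hgsum
  have h2 : (∑' n, g n) = 2 * Real.exp (-χ * |(m : ℝ)|) / jnorm m ^ 2 * (S + S) := by
    have hT : (∑' n : ℤ, 1 / jnorm (m - n) ^ 2) = S := by
      rw [hS]
      exact (Equiv.subLeft m).tsum_eq (fun k : ℤ => 1 / jnorm k ^ 2)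
    rw [hg]
    rw [tsum_mul_left, Summable.tsum_add hshift summable_jnorm_inv_sq, hT]
  calc (∑' n, f n) ≤ 2 * Real.exp (-χ * |(m : ℝ)|) / jnorm m ^ 2 * (S + S) := h1.trans h2.le
  _ = 4 * S * Real.exp (-χ * |(m : ℝ)|) / jnorm m ^ 2 := by ring
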